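/- The gauge mode θ(ρ) = 2ρ/(1+ρ²) is a solution of the eigenvalue equation u'' + (2/ρ - 2λρ/(1-ρ²))u' - (2cos(2f₀)/(ρ²(1-ρ²)) + λ(1+λ)/(1-ρ²))u = 0 with λ = 1, where f₀(ρ) = 2·arctan(ρ), for all ρ ∈ (0,1). -/

import Mathlib

noncomputable def f₀ : ℝ → ℝ := fun ρ => 2 * Real.arctan ρ

noncomputable def θ : ℝ → ℝ := fun ρ => 2 * ρ / (1 + ρ^2)

lemma one_add_sq_pos (x : ℝ) : (0:ℝ) < 1 + x^2 := by positivity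

lemma deriv_theta : deriv θ = fun x => 2 * (1 - x^2) / (1 + x^2)^2 := by
  funext x
  have hne : (1 + x^2) ≠ 0 := (one_add_sq_pos x).ne'
  have h : HasDerivAt θ (2 * (1 - x^2) / (1 + x^2)^2) x := by
    have h1 : HasDerivAt (fun y : ℝ => 2 * y) 2 x := by
      simpa using (hasDerivAt_id x).const_mul 2
    have h2 : HasDerivAt (fun y : ℝ => 1 + y^2) (2 * x) x := by
      simpa using ((hasDerivAt_pow 2 x).const_add 1)
    have := h1.div h2 hne
    refine this.congr_deriv ?_
    field_simp
    ring
  exact h.deriv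

lemma deriv_deriv_theta (x : ℝ) :
    deriv (deriv θ) x = -4 * x * (3 - x^2) / (1 + x^2)^3 := by
  rw [deriv_theta]
  have hne : (1 + x^2) ≠ 0 := (one_add_sq_pos x).ne'
  have h : HasDerivAt (fun y : ℝ => 2 * (1 - y^2) / (1 + y^2)^2)
      (-4 * x * (3 - x^2) / (1 + x^2)^3) x := by
    have h1 : HasDerivAt (fun y : ℝ => 2 * (1 - y^2)) (-(4*x)) x := by
      have : HasDerivAt (fun y : ℝ => 1 - y^2) (-(2*x)) x := by
        simpa using ((hasDerivAt_pow 2 x).const_sub 1)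
      have := this.const_mul 2
      refine this.congr_deriv ?_
      ring
    have h2 : HasDerivAt (fun y : ℝ => (1 + y^2)^2) (2 * (1 + x^2) * (2*x)) x := by
      have hb : HasDerivAt (fun y : ℝ => 1 + y^2) (2 * x) x := by
        simpa using ((hasDerivAt_pow 2 x).const_add 1)
      have := hb.pow 2
      refine this.congr_deriv ?_
      norm_num
    have := h1.div h2 (by positivity)
    refine this.congr_deriv ?_
    field_simp
    ring
  exact h.deriv

lemma cos_2f₀ (x : ℝ) : Real.cos (2 * f₀ x) = 1 - 8 * x^2 / (1 + x^2)^2 := by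
  have hs : Real.sin (2 * Real.arctan x) = 2 * x / (1 + x^2) := by
    rw [Real.sin_two_mul, Real.sin_arctan, Real.cos_arctan]
    have hsq : Real.sqrt (1 + x^2) ^ 2 = 1 + x^2 := Real.sq_sqrt (by positivity)
    have hsne : Real.sqrt (1 + x^2) ≠ 0 := by positivity
    field_simp
    rw [hsq]

  have : (2 : ℝ) * f₀ x = 2 * (2 * Real.arctan x) := by simp [f₀]
  have hc : Real.cos (2 * (2 * Real.arctan x)) = 1 - 2 * Real.sin (2 * Real.arctan x) ^ 2 := by
    rw [Real.cos_two_mul, ← Real.sin_sq_add_cos_sq (2 * Real.arctan x)]; ring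
  rw [this, hc, hs]
  have hne : (1 + x^2) ≠ 0 := (one_add_sq_pos x).ne'
  field_simp
  ring

theorem gauge_mode_solves_eigenvalue_eq (ρ : ℝ) (hρ : ρ ∈ Set.Ioo (0:ℝ) 1) :
    deriv (deriv θ) ρ + (2 / ρ - 2 * 1 * ρ / (1 - ρ^2)) * deriv θ ρ
      - (2 * Real.cos (2 * f₀ ρ) / (ρ^2 * (1 - ρ^2)) + 1 * (1 + 1) / (1 - ρ^2)) * θ ρ = 0 := by
  obtain ⟨h0, h1⟩ := hρ
  have hne : (1 + ρ^2) ≠ 0 := (one_add_sq_pos ρ).ne'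
  have hρne : ρ ≠ 0 := h0.ne'
  have h1ne : (1 - ρ^2) ≠ 0 := by nlinarith
  rw [deriv_deriv_theta, deriv_theta, cos_2f₀, θ]
  field_simp
  ring
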